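/- Let G be K_{4,4}^- or K_{4,4}, with bipartition (V_1, V_2) of its vertex set, and let G_e be obtained from G by adding a new edge e between two non-adjacent vertices lying in the same side of the bipartition. Then there exists a circle X of G_e such that the contraction G_e/X has a minor isomorphic to K_{3,3}. -/

import Mathlib

/-! Common definitions for formalizing "On the Interplay between Graphic and
Cographic Matroids with Graphic Cocircuits" (arXiv:0909.5033). -/

section MatroidDefs

variable {α β : Type*}

/-- Deletion of a set of elements from a matroid: `M \ D`. -/
def mDel (M : Matroid α) (D : Set α) : Matroid α := M.restrict (M.E \ D)

/-- Contraction of a set of elements in a matroid: `M / C = (M✶ \ C)✶`. -/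
def mCon (M : Matroid α) (C : Set α) : Matroid α := (mDel M✶ C)✶

/-- `MinorOf N M` means `N` can be obtained from `M` by a sequence of deletions
and contractions. -/
inductive MinorOf : Matroid α → Matroid α → Prop
  | refl (M : Matroid α) : MinorOf M M
  | del {N M : Matroid α} (D : Set α) : MinorOf N M → MinorOf (mDel N D) M
  | con {N M : Matroid α} (C : Set α) : MinorOf N M → MinorOf (mCon N C) M

/-- `C` is a circuit of the matroid `M`: a minimal dependent set. -/
def IsCircuitOf (M : Matroid α) (C : Set α) : Prop :=
  M.Dep C ∧ ∀ D, D ⊂ C → M.Indep D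

/-- `C` is a cocircuit of `M`: a circuit of the dual matroid. -/
def IsCocircuitOf (M : Matroid α) (C : Set α) : Prop := IsCircuitOf M✶ C

/-- Matroid isomorphism: a bijection between the ground sets preserving independence. -/
def MatroidIso (M : Matroid α) (N : Matroid β) : Prop :=
  ∃ f : α → β, Set.BijOn f M.E N.E ∧ ∀ I ⊆ M.E, (M.Indep I ↔ N.Indep (f '' I))

/-- `M` has a minor isomorphic to `N`. -/
def HasMinorIso (M : Matroid α) (N : Matroid β) : Prop :=
  ∃ M₀ : Matroid α, MinorOf M₀ M ∧ MatroidIso M₀ N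

/-- A matroid is simple if it has no circuits of size one or two. -/
def IsSimpleMatroid (M : Matroid α) : Prop :=
  ∀ C, IsCircuitOf M C → C.ncard ≠ 1 ∧ C.ncard ≠ 2

/-- A `k`-separation of a matroid (rank condition phrased via bases of the two sides,
which all have the same cardinality): `r(X) + r(Y) - r(M) ≤ k - 1`. -/
def MatroidKSeparation (M : Matroid α) (k : ℕ) : Prop :=
  ∃ X Y : Set α, X ∪ Y = M.E ∧ Disjoint X Y ∧ k ≤ X.ncard ∧ k ≤ Y.ncard ∧
    ∀ I J B, M.IsBasis I X → M.IsBasis J Y → M.IsBase B →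
      I.ncard + J.ncard + 1 ≤ B.ncard + k

/-- A matroid is 3-connected if it has no 1-separation and no 2-separation. -/
def MatroidThreeConnected (M : Matroid α) : Prop :=
  ¬ MatroidKSeparation M 1 ∧ ¬ MatroidKSeparation M 2

/-- Representability of a matroid over a field `F`. -/
def IsRepresentableOver (M : Matroid α) (F : Type) [Field F] : Prop :=
  ∃ (n : ℕ) (φ : α → (Fin n → F)), ∀ I, I ⊆ M.E →
    (M.Indep I ↔ LinearIndependent F (fun x : I => φ x))

/-- A matroid is regular if it is representable over every field. -/
def IsRegularMatroid (M : Matroid α) : Prop :=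
  ∀ (F : Type) [Field F], IsRepresentableOver M F

end MatroidDefs

section GraphDefs

variable {V W : Type*}

/-- A circle of a graph: the edge set of a cycle. -/
def IsGraphCircle (G : SimpleGraph V) (X : Set (Sym2 V)) : Prop :=
  ∃ (u : V) (c : G.Walk u u), c.IsCycle ∧ X = {e | e ∈ c.edges}

/-- The contraction `G/X` of a set of edges `X` in a graph `G`: vertices are the
connected components of the subgraph formed by the edges of `X`, and distinct
components are adjacent if `G` has an edge outside `X` joining them. -/
def contractGraph (G : SimpleGraph V) (X : Set (Sym2 V)) :
    SimpleGraph (SimpleGraph.fromEdgeSet X ⊓ G).ConnectedComponent :=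
  SimpleGraph.fromRel fun a b => ∃ u v : V, G.Adj u v ∧ s(u, v) ∉ X ∧
    a = (SimpleGraph.fromEdgeSet X ⊓ G).connectedComponentMk u ∧
    b = (SimpleGraph.fromEdgeSet X ⊓ G).connectedComponentMk v

/-- `G` has a minor isomorphic to `H` (branch-set/minor-model definition). -/
def HasGraphMinor (G : SimpleGraph V) (H : SimpleGraph W) : Prop :=
  ∃ φ : W → Set V,
    (∀ w, (φ w).Nonempty) ∧
    (∀ w, ((G.induce (φ w)).Connected)) ∧
    (Pairwise fun w₁ w₂ => Disjoint (φ w₁) (φ w₂)) ∧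
    ∀ ⦃w₁ w₂⦄, H.Adj w₁ w₂ → ∃ v₁ ∈ φ w₁, ∃ v₂ ∈ φ w₂, G.Adj v₁ v₂

/-- The degree of a vertex, as the cardinality of its neighbour set. -/
noncomputable def vDeg (G : SimpleGraph V) (v : V) : ℕ := (G.neighborSet v).ncard

/-- The set of end-vertices of a set of edges. -/
def edgeEndpoints (A : Set (Sym2 V)) : Set V := {v | ∃ e ∈ A, v ∈ e}

/-- A Tutte `k`-separation of a graph: a partition `(A, B)` of the edge set with
`min(|A|,|B|) ≥ k` and exactly `k` vertices in common between `G[A]` and `G[B]`. -/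
def GraphKSeparation (G : SimpleGraph V) (k : ℕ) : Prop :=
  ∃ A B : Set (Sym2 V), A ∪ B = G.edgeSet ∧ Disjoint A B ∧
    k ≤ A.ncard ∧ k ≤ B.ncard ∧ (edgeEndpoints A ∩ edgeEndpoints B).ncard = k

/-- Tutte 3-connectivity of a graph. -/
def GraphThreeConnected (G : SimpleGraph V) : Prop :=
  G.Connected ∧ ¬ GraphKSeparation G 1 ∧ ¬ GraphKSeparation G 2

/-- `M` is the cycle matroid of the graph `G`: the ground set is the edge set of `G`
and the circuits are exactly the circles (edge sets of cycles) of `G`. -/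
def IsCycleMatroidOf (M : Matroid (Sym2 V)) (G : SimpleGraph V) : Prop :=
  M.E = G.edgeSet ∧ ∀ C, IsCircuitOf M C ↔ IsGraphCircle G C

/-- A matroid is graphic if it is isomorphic to the cycle matroid of some graph. -/
def IsGraphicMatroid {α : Type*} (M : Matroid α) : Prop :=
  ∃ (V : Type) (G : SimpleGraph V) (N : Matroid (Sym2 V)),
    IsCycleMatroidOf N G ∧ MatroidIso M N

/-- A matroid is cographic if its dual is graphic. -/
def IsCographicMatroid {α : Type*} (M : Matroid α) : Prop := IsGraphicMatroid M✶

/-- Operation O2 data at a vertex `v`: a partition of the neighbours of `v`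
(of degree at least 4) into two parts of size at least two each (so that both new
vertices have degree greater than 2). -/
def IsO2Partition (G : SimpleGraph V) (v : V) (S₁ S₂ : Set V) : Prop :=
  4 ≤ (G.neighborSet v).ncard ∧ S₁ ∪ S₂ = G.neighborSet v ∧ Disjoint S₁ S₂ ∧
    2 ≤ S₁.ncard ∧ 2 ≤ S₂.ncard

/-- The graph obtained from `G` by operation O2 at `v`, with neighbour partition
`(S₁, S₂)` : the vertex `some v` plays the role of `v₁`, the new vertex `none`
plays the role of `v₂`, and `v₁`, `v₂` are adjacent. -/
def o2Graph (G : SimpleGraph V) (v : V) (S₁ S₂ : Set V) : SimpleGraph (Option V) :=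
  SimpleGraph.fromRel fun a b =>
    (∃ u w, u ≠ v ∧ w ≠ v ∧ G.Adj u w ∧ a = some u ∧ b = some w) ∨
    (∃ u, u ∈ S₁ ∧ a = some v ∧ b = some u) ∨
    (∃ u, u ∈ S₂ ∧ a = none ∧ b = some u) ∨
    (a = some v ∧ b = none)

end GraphDefs

section NamedGraphs

/-- The complete graph `K₅`. -/
def K5 : SimpleGraph (Fin 5) := SimpleGraph.completeGraph (Fin 5)

/-- The complete bipartite graph `K₃,₃`. -/
def K33 : SimpleGraph (Fin 3 ⊕ Fin 3) := completeBipartiteGraph (Fin 3) (Fin 3)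

/-- The complete bipartite graph `K₃,₅`. -/
def K35 : SimpleGraph (Fin 3 ⊕ Fin 5) := completeBipartiteGraph (Fin 3) (Fin 5)

/-- The complete bipartite graph `K₄,₄`. -/
def K44 : SimpleGraph (Fin 4 ⊕ Fin 4) := completeBipartiteGraph (Fin 4) (Fin 4)

/-- `K₄,₄` minus an edge. -/
def K44minus : SimpleGraph (Fin 4 ⊕ Fin 4) :=
  K44.deleteEdges {s(Sum.inl 0, Sum.inr 0)}

/-- The complete bipartite graph `K₃,ₙ`, with side `A` of size 3 and side `B` of size `n`. -/
def K3n (n : ℕ) : SimpleGraph (Fin 3 ⊕ Fin n) := completeBipartiteGraph (Fin 3) (Fin n)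

/-- `K₃,ₙ` plus one edge inside the side `A`. -/
def K3nPlus1 (n : ℕ) : SimpleGraph (Fin 3 ⊕ Fin n) :=
  K3n n ⊔ SimpleGraph.fromEdgeSet {s(Sum.inl 0, Sum.inl 1)}

/-- `K₃,ₙ` plus two edges inside the side `A`. -/
def K3nPlus2 (n : ℕ) : SimpleGraph (Fin 3 ⊕ Fin n) :=
  K3n n ⊔ SimpleGraph.fromEdgeSet {s(Sum.inl 0, Sum.inl 1), s(Sum.inl 0, Sum.inl 2)}

/-- `K₃,ₙ` plus all three edges inside the side `A`. -/
def K3nPlus3 (n : ℕ) : SimpleGraph (Fin 3 ⊕ Fin n) :=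
  K3n n ⊔ SimpleGraph.fromEdgeSet
    {s(Sum.inl 0, Sum.inl 1), s(Sum.inl 0, Sum.inl 2), s(Sum.inl 1, Sum.inl 2)}

/-- The family `{K₃,ₙ, K₃,ₙ⁺¹, K₃,ₙ⁺², K₃,ₙ⁺³}`. -/
def K3nFamily (n : ℕ) : Set (SimpleGraph (Fin 3 ⊕ Fin n)) :=
  {K3n n, K3nPlus1 n, K3nPlus2 n, K3nPlus3 n}

end NamedGraphs

section SignedGraphs

variable {V : Type*}

/-- The number of negative edges of a walk, for a sign function `σ`
(`σ e = false` meaning that `e` is negative). -/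
def negCount (σ : Sym2 V → Bool) {G : SimpleGraph V} {u v : V} (c : G.Walk u v) : ℕ :=
  (c.edges.filter fun e => !σ e).length

/-- Circuits of a signed graph `(G, σ)`: a positive cycle; or two negative cycles
meeting in exactly one vertex; or two vertex-disjoint negative cycles joined by a
path meeting the cycles only in its end vertices. -/
def IsSignedCircuit (G : SimpleGraph V) (σ : Sym2 V → Bool) (C : Set (Sym2 V)) : Prop :=
  (∃ (u : V) (c : G.Walk u u), c.IsCycle ∧ Even (negCount σ c) ∧
      C = {e | e ∈ c.edges}) ∨
  (∃ (w : V) (c₁ c₂ : G.Walk w w), c₁.IsCycle ∧ c₂.IsCycle ∧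
      Odd (negCount σ c₁) ∧ Odd (negCount σ c₂) ∧
      {x | x ∈ c₁.support} ∩ {x | x ∈ c₂.support} = {w} ∧
      C = {e | e ∈ c₁.edges} ∪ {e | e ∈ c₂.edges}) ∨
  (∃ (u v : V) (c₁ : G.Walk u u) (c₂ : G.Walk v v) (p : G.Walk u v),
      c₁.IsCycle ∧ c₂.IsCycle ∧ p.IsPath ∧
      Odd (negCount σ c₁) ∧ Odd (negCount σ c₂) ∧
      {x | x ∈ c₁.support} ∩ {x | x ∈ c₂.support} = ∅ ∧
      {x | x ∈ p.support} ∩ {x | x ∈ c₁.support} = {u} ∧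
      {x | x ∈ p.support} ∩ {x | x ∈ c₂.support} = {v} ∧
      C = {e | e ∈ c₁.edges} ∪ {e | e ∈ c₂.edges} ∪ {e | e ∈ p.edges})

/-- `M` is the signed-graphic matroid of the signed graph `(G, σ)`. -/
def IsSignedGraphicMatroidOf (M : Matroid (Sym2 V)) (G : SimpleGraph V)
    (σ : Sym2 V → Bool) : Prop :=
  M.E = G.edgeSet ∧ ∀ C, IsCircuitOf M C ↔ IsSignedCircuit G σ C

/-- A matroid is signed-graphic if it is isomorphic to the matroid of some signed graph. -/
def IsSignedGraphicMatroid {α : Type*} (M : Matroid α) : Prop :=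
  ∃ (V : Type) (G : SimpleGraph V) (σ : Sym2 V → Bool) (N : Matroid (Sym2 V)),
    IsSignedGraphicMatroidOf N G σ ∧ MatroidIso M N

end SignedGraphs

open SimpleGraph in
lemma aux_induce_singleton_connected {V : Type*} (G : SimpleGraph V) (x : V) :
    (G.induce {x}).Connected := by
  rw [SimpleGraph.connected_iff]
  refine ⟨?_, ⟨⟨x, rfl⟩⟩⟩
  intro a b
  have : a = b := Subtype.ext (by
    have ha := a.2; have hb := b.2
    simp only [Set.mem_singleton_iff] at ha hb
    rw [ha, hb])
  exact this ▸ Reachable.refl a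

lemma aux_vec3_inj {α : Type*} {x y z : α} (h1 : x ≠ y) (h2 : x ≠ z) (h3 : y ≠ z) :
    Function.Injective ![x, y, z] := by
  intro i j h
  fin_cases i <;> fin_cases j <;> simp_all

lemma aux_elim_T {α : Type*} {u v w a₁ a₂ b₁ b₂ b₃ : α}
    (h1 : ¬v = a₁) (h2 : ¬v = a₂) (h3 : ¬v = b₁) (h4 : ¬v = b₂) (h5 : ¬v = b₃)
    (h6 : ¬w = a₁) (h7 : ¬w = a₂) (h8 : ¬w = b₁) (h9 : ¬w = b₂) (h10 : ¬w = b₃)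
    (h11 : ¬u = a₁) (h12 : ¬u = a₂) (h13 : ¬u = b₁) (h14 : ¬u = b₂) (h15 : ¬u = b₃) :
    ∀ z : Fin 3 ⊕ Fin 3,
      (Sum.elim ![u, a₁, a₂] ![b₁, b₂, b₃] z = u ∨
       Sum.elim ![u, a₁, a₂] ![b₁, b₂, b₃] z = v ∨
       Sum.elim ![u, a₁, a₂] ![b₁, b₂, b₃] z = w) → z = Sum.inl 0 := by
  rintro (i | i) h <;> fin_cases i <;> simp_all <;> tauto

open SimpleGraph in
set_option maxHeartbeats 2000000 in
lemma main {V : Type*} (G' : SimpleGraph V)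
    (u v w a₁ a₂ b₁ b₂ b₃ : V)
    (hnd : ([u, v, w, a₁, a₂, b₁, b₂, b₃] : List V).Nodup)
    (huv : G'.Adj u v) (hvw : G'.Adj v w) (hwu : G'.Adj w u)
    (hub₁ : G'.Adj u b₁) (hub₂ : G'.Adj u b₂) (hub₃ : G'.Adj u b₃)
    (ha₁b₁ : G'.Adj a₁ b₁) (ha₁b₂ : G'.Adj a₁ b₂) (ha₁b₃ : G'.Adj a₁ b₃)
    (ha₂b₁ : G'.Adj a₂ b₁) (ha₂b₂ : G'.Adj a₂ b₂) (ha₂b₃ : G'.Adj a₂ b₃) :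
    ∃ X : Set (Sym2 V),
      IsGraphCircle G' X ∧ HasGraphMinor (contractGraph G' X) K33 := by
  simp only [List.nodup_cons, List.mem_cons, List.not_mem_nil, or_false, List.mem_singleton,
    not_or, List.nodup_nil, and_true] at hnd
  obtain ⟨⟨huv', huw, hua₁, hua₂, hub₁', hub₂', hub₃'⟩,
    ⟨hvw', hva₁, hva₂, hvb₁, hvb₂, hvb₃⟩,
    ⟨hwa₁, hwa₂, hwb₁, hwb₂, hwb₃⟩,
    ⟨ha₁a₂, ha₁b₁', ha₁b₂', ha₁b₃'⟩,
    ⟨ha₂b₁', ha₂b₂', ha₂b₃'⟩,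
    ⟨hb₁b₂, hb₁b₃⟩, hb₂b₃, -⟩ := hnd
  set X : Set (Sym2 V) := {s(u, v), s(v, w), s(w, u)} with hX
  have hXmem : ∀ x y : V, s(x, y) ∈ X → (x = u ∨ x = v ∨ x = w) ∧ (y = u ∨ y = v ∨ y = w) := by
    intro x y h
    simp only [hX, Set.mem_insert_iff, Set.mem_singleton_iff, Sym2.eq_iff] at h
    tauto
  set H := SimpleGraph.fromEdgeSet X ⊓ G' with hH
  have hHadj : ∀ x y : V, H.Adj x y → (x = u ∨ x = v ∨ x = w) ∧ (y = u ∨ y = v ∨ y = w) := by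
    intro x y h
    exact hXmem x y (by simpa using h.1.1)
  have hreach : ∀ x y : V, H.Reachable x y →
      x = y ∨ ((x = u ∨ x = v ∨ x = w) ∧ (y = u ∨ y = v ∨ y = w)) := by
    intro x y ⟨p⟩
    induction p with
    | nil => exact Or.inl rfl
    | cons h p ih =>
      have h1 := hHadj _ _ h
      rcases ih with rfl | h2
      · exact Or.inr h1
      · exact Or.inr ⟨h1.1, h2.2⟩
  have hHuv : H.Adj u v := ⟨⟨by simp [hX], huv'⟩, huv⟩
  have hHvw : H.Adj v w := ⟨⟨by simp [hX], hvw'⟩, hvw⟩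
  have hcomp : ∀ x y : V, H.connectedComponentMk x = H.connectedComponentMk y ↔
      (x = y ∨ ((x = u ∨ x = v ∨ x = w) ∧ (y = u ∨ y = v ∨ y = w))) := by
    intro x y
    constructor
    · intro h
      exact hreach x y (ConnectedComponent.exact h)
    · rintro (rfl | ⟨hx, hy⟩)
      · rfl
      have ru : ∀ z, (z = u ∨ z = v ∨ z = w) → H.Reachable u z := by
        rintro z (rfl | rfl | rfl)
        · rfl
        · exact hHuv.reachable
        · exact hHuv.reachable.trans hHvw.reachable
      exact ConnectedComponent.sound ((ru x hx).symm.trans (ru y hy))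
  refine ⟨X, ⟨u, .cons huv (.cons hvw (.cons hwu .nil)), ?_, ?_⟩, ?_⟩
  · rw [Walk.isCycle_def]
    refine ⟨?_, by simp, ?_⟩
    · rw [Walk.isTrail_def]
      simp only [Walk.edges_cons, Walk.edges_nil, List.nodup_cons, List.mem_cons,
        List.not_mem_nil, or_false, List.nodup_nil, and_true, List.mem_singleton,
        Sym2.eq_iff]
      tauto
    · simp only [Walk.support_cons, Walk.support_nil, List.tail_cons, List.nodup_cons,
        List.mem_cons, List.not_mem_nil, or_false, List.nodup_nil, and_true,
        List.mem_singleton]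
      tauto
  · ext e
    simp only [Walk.edges_cons, Walk.edges_nil, List.mem_cons, List.not_mem_nil, or_false,
      Set.mem_setOf_eq, hX, Set.mem_insert_iff, Set.mem_singleton_iff]
  · -- minor
    set r : Fin 3 ⊕ Fin 3 → V := Sum.elim ![u, a₁, a₂] ![b₁, b₂, b₃] with hr
    set mk : V → H.ConnectedComponent := H.connectedComponentMk with hmk
    have hrinj : Function.Injective r := by
      rw [hr]
      apply Function.Injective.sumElim
      · exact aux_vec3_inj hua₁ hua₂ ha₁a₂
      · exact aux_vec3_inj hb₁b₂ hb₁b₃ hb₂b₃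
      · intro i j
        fin_cases i <;> fin_cases j <;> simp <;> tauto
    have hT := aux_elim_T hva₁ hva₂ hvb₁ hvb₂ hvb₃ hwa₁ hwa₂ hwb₁ hwb₂ hwb₃
      hua₁ hua₂ hub₁' hub₂' hub₃'
    have hFinj : ∀ z₁ z₂, mk (r z₁) = mk (r z₂) → z₁ = z₂ := by
      intro z₁ z₂ h
      rcases (hcomp _ _).1 h with h' | ⟨h₁, h₂⟩
      · exact hrinj h'
      · rw [hT _ h₁, hT _ h₂]
    refine ⟨fun z => {mk (r z)}, fun z => ⟨_, rfl⟩,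
      fun z => aux_induce_singleton_connected _ _, ?_, ?_⟩
    · intro z₁ z₂ hne
      exact Set.disjoint_singleton.mpr fun h => hne (hFinj _ _ h)
    · have hadjc : ∀ x y : V, G'.Adj x y → s(x, y) ∉ X → mk x ≠ mk y →
          (contractGraph G' X).Adj (mk x) (mk y) := by
        intro x y h hXn hne
        exact ⟨hne, Or.inl ⟨x, y, h, hXn, rfl, rfl⟩⟩
      have hnotX : ∀ x y : V, ¬(x = u ∨ x = v ∨ x = w) → s(x, y) ∉ X := by
        intro x y h hmem
        exact h (hXmem x y hmem).1
      have hnotX' : ∀ y : V, ¬(y = u ∨ y = v ∨ y = w) → s(u, y) ∉ X := by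
        intro y h hmem
        exact h (hXmem u y hmem).2
      have hadj9 : ∀ i j, G'.Adj (r (Sum.inl i)) (r (Sum.inr j)) := by
        intro i j
        fin_cases i <;> fin_cases j
        exacts [hub₁, hub₂, hub₃, ha₁b₁, ha₁b₂, ha₁b₃, ha₂b₁, ha₂b₂, ha₂b₃]
      have hnx9 : ∀ i j, s(r (Sum.inl i), r (Sum.inr j)) ∉ X := by
        intro i j
        fin_cases i <;> fin_cases j
        exacts [hnotX' b₁ (by tauto), hnotX' b₂ (by tauto), hnotX' b₃ (by tauto),
          hnotX a₁ b₁ (by tauto), hnotX a₁ b₂ (by tauto), hnotX a₁ b₃ (by tauto),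
          hnotX a₂ b₁ (by tauto), hnotX a₂ b₂ (by tauto), hnotX a₂ b₃ (by tauto)]
      have hcross : ∀ i j, (contractGraph G' X).Adj (mk (r (Sum.inl i))) (mk (r (Sum.inr j))) := by
        intro i j
        exact hadjc _ _ (hadj9 i j) (hnx9 i j) (fun h => by simpa using hFinj _ _ h)
      rintro (i | i) (j | j) hadj2
      · exact absurd hadj2 (by simp [K33])
      · exact ⟨_, rfl, _, rfl, hcross i j⟩
      · exact ⟨_, rfl, _, rfl, (hcross j i).symm⟩
      · exact absurd hadj2 (by simp [K33])

lemma kadj : ∀ i j : Fin 4, ¬(i = 0 ∧ j = 0) → K44minus.Adj (Sum.inl i) (Sum.inr j) := by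
  intro i j h
  simp only [K44minus, K44, SimpleGraph.deleteEdges_adj, completeBipartiteGraph,
    Set.mem_singleton_iff, Sym2.eq_iff]
  simp only [Sum.isLeft_inl, Sum.isRight_inr]
  refine ⟨by tauto, ?_⟩
  intro hmem
  rcases hmem with ⟨h1, h2⟩ | ⟨h1, h2⟩ <;> simp_all


set_option maxHeartbeats 1000000

/-- Let `G` be `K₄,₄⁻` or `K₄,₄`, and let `G_e` be obtained from `G` by
adding an edge between two non-adjacent vertices lying in the same side of the
bipartition. Then some circle `X` of `G_e` satisfies: `G_e/X` has a `K₃,₃`-minor. -/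
theorem statement_13 (G : SimpleGraph (Fin 4 ⊕ Fin 4)) (hG : G = K44minus ∨ G = K44)
    (u v : Fin 4 ⊕ Fin 4) (huv : u ≠ v)
    (hside : (u ∈ Set.range (Sum.inl : Fin 4 → Fin 4 ⊕ Fin 4) ∧
              v ∈ Set.range (Sum.inl : Fin 4 → Fin 4 ⊕ Fin 4)) ∨
             (u ∈ Set.range (Sum.inr : Fin 4 → Fin 4 ⊕ Fin 4) ∧
              v ∈ Set.range (Sum.inr : Fin 4 → Fin 4 ⊕ Fin 4)))
    (hadj : ¬ G.Adj u v) :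
    ∃ X : Set (Sym2 (Fin 4 ⊕ Fin 4)),
      IsGraphCircle (G ⊔ SimpleGraph.fromEdgeSet {s(u, v)}) X ∧
      HasGraphMinor (contractGraph (G ⊔ SimpleGraph.fromEdgeSet {s(u, v)}) X) K33 := by
  
  have hK : K44minus ≤ G ⊔ SimpleGraph.fromEdgeSet {s(u, v)} := by
    refine le_trans ?_ le_sup_left
    rcases hG with rfl | rfl
    · exact le_refl _
    · exact SimpleGraph.deleteEdges_le _
  have he : (G ⊔ SimpleGraph.fromEdgeSet {s(u, v)}).Adj u v := by
    rw [SimpleGraph.sup_adj, SimpleGraph.fromEdgeSet_adj]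
    exact Or.inr ⟨rfl, huv⟩
  have hA : ∀ i j : Fin 4, ¬(i = 0 ∧ j = 0) →
      (G ⊔ SimpleGraph.fromEdgeSet {s(u, v)}).Adj (Sum.inl i) (Sum.inr j) :=
    fun i j h => hK (kadj i j h)
  have hA' : ∀ j i : Fin 4, ¬(i = 0 ∧ j = 0) →
      (G ⊔ SimpleGraph.fromEdgeSet {s(u, v)}).Adj (Sum.inr j) (Sum.inl i) :=
    fun j i h => (hA i j h).symm
  rcases hside with ⟨⟨p, rfl⟩, ⟨q, rfl⟩⟩ | ⟨⟨p, rfl⟩, ⟨q, rfl⟩⟩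
  · have hpq : p ≠ q := fun h => huv (by rw [h])
    fin_cases p <;> fin_cases q
    · exact absurd rfl hpq
    · refine main _ (Sum.inl 1) (Sum.inl 0) (Sum.inr 1) (Sum.inl 2) (Sum.inl 3) (Sum.inr 0) (Sum.inr 2) (Sum.inr 3) (by decide) ?_ ?_ ?_ ?_ ?_ ?_ ?_ ?_ ?_ ?_ ?_ ?_ <;>
        first
        | exact he
        | exact he.symm
        | exact hA _ _ (by decide)
        | exact hA' _ _ (by decide)
    · refine main _ (Sum.inl 2) (Sum.inl 0) (Sum.inr 1) (Sum.inl 1) (Sum.inl 3) (Sum.inr 0) (Sum.inr 2) (Sum.inr 3) (by decide) ?_ ?_ ?_ ?_ ?_ ?_ ?_ ?_ ?_ ?_ ?_ ?_ <;>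
        first
        | exact he
        | exact he.symm
        | exact hA _ _ (by decide)
        | exact hA' _ _ (by decide)
    · refine main _ (Sum.inl 3) (Sum.inl 0) (Sum.inr 1) (Sum.inl 1) (Sum.inl 2) (Sum.inr 0) (Sum.inr 2) (Sum.inr 3) (by decide) ?_ ?_ ?_ ?_ ?_ ?_ ?_ ?_ ?_ ?_ ?_ ?_ <;>
        first
        | exact he
        | exact he.symm
        | exact hA _ _ (by decide)
        | exact hA' _ _ (by decide)
    · refine main _ (Sum.inl 1) (Sum.inl 0) (Sum.inr 1) (Sum.inl 2) (Sum.inl 3) (Sum.inr 0) (Sum.inr 2) (Sum.inr 3) (by decide) ?_ ?_ ?_ ?_ ?_ ?_ ?_ ?_ ?_ ?_ ?_ ?_ <;>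
        first
        | exact he
        | exact he.symm
        | exact hA _ _ (by decide)
        | exact hA' _ _ (by decide)
    · exact absurd rfl hpq
    · refine main _ (Sum.inl 1) (Sum.inl 2) (Sum.inr 0) (Sum.inl 0) (Sum.inl 3) (Sum.inr 1) (Sum.inr 2) (Sum.inr 3) (by decide) ?_ ?_ ?_ ?_ ?_ ?_ ?_ ?_ ?_ ?_ ?_ ?_ <;>
        first
        | exact he
        | exact he.symm
        | exact hA _ _ (by decide)
        | exact hA' _ _ (by decide)
    · refine main _ (Sum.inl 1) (Sum.inl 3) (Sum.inr 0) (Sum.inl 0) (Sum.inl 2) (Sum.inr 1) (Sum.inr 2) (Sum.inr 3) (by decide) ?_ ?_ ?_ ?_ ?_ ?_ ?_ ?_ ?_ ?_ ?_ ?_ <;>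
        first
        | exact he
        | exact he.symm
        | exact hA _ _ (by decide)
        | exact hA' _ _ (by decide)
    · refine main _ (Sum.inl 2) (Sum.inl 0) (Sum.inr 1) (Sum.inl 1) (Sum.inl 3) (Sum.inr 0) (Sum.inr 2) (Sum.inr 3) (by decide) ?_ ?_ ?_ ?_ ?_ ?_ ?_ ?_ ?_ ?_ ?_ ?_ <;>
        first
        | exact he
        | exact he.symm
        | exact hA _ _ (by decide)
        | exact hA' _ _ (by decide)
    · refine main _ (Sum.inl 2) (Sum.inl 1) (Sum.inr 0) (Sum.inl 0) (Sum.inl 3) (Sum.inr 1) (Sum.inr 2) (Sum.inr 3) (by decide) ?_ ?_ ?_ ?_ ?_ ?_ ?_ ?_ ?_ ?_ ?_ ?_ <;>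
        first
        | exact he
        | exact he.symm
        | exact hA _ _ (by decide)
        | exact hA' _ _ (by decide)
    · exact absurd rfl hpq
    · refine main _ (Sum.inl 2) (Sum.inl 3) (Sum.inr 0) (Sum.inl 0) (Sum.inl 1) (Sum.inr 1) (Sum.inr 2) (Sum.inr 3) (by decide) ?_ ?_ ?_ ?_ ?_ ?_ ?_ ?_ ?_ ?_ ?_ ?_ <;>
        first
        | exact he
        | exact he.symm
        | exact hA _ _ (by decide)
        | exact hA' _ _ (by decide)
    · refine main _ (Sum.inl 3) (Sum.inl 0) (Sum.inr 1) (Sum.inl 1) (Sum.inl 2) (Sum.inr 0) (Sum.inr 2) (Sum.inr 3) (by decide) ?_ ?_ ?_ ?_ ?_ ?_ ?_ ?_ ?_ ?_ ?_ ?_ <;>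
        first
        | exact he
        | exact he.symm
        | exact hA _ _ (by decide)
        | exact hA' _ _ (by decide)
    · refine main _ (Sum.inl 3) (Sum.inl 1) (Sum.inr 0) (Sum.inl 0) (Sum.inl 2) (Sum.inr 1) (Sum.inr 2) (Sum.inr 3) (by decide) ?_ ?_ ?_ ?_ ?_ ?_ ?_ ?_ ?_ ?_ ?_ ?_ <;>
        first
        | exact he
        | exact he.symm
        | exact hA _ _ (by decide)
        | exact hA' _ _ (by decide)
    · refine main _ (Sum.inl 3) (Sum.inl 2) (Sum.inr 0) (Sum.inl 0) (Sum.inl 1) (Sum.inr 1) (Sum.inr 2) (Sum.inr 3) (by decide) ?_ ?_ ?_ ?_ ?_ ?_ ?_ ?_ ?_ ?_ ?_ ?_ <;>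
        first
        | exact he
        | exact he.symm
        | exact hA _ _ (by decide)
        | exact hA' _ _ (by decide)
    · exact absurd rfl hpq
  · have hpq : p ≠ q := fun h => huv (by rw [h])
    fin_cases p <;> fin_cases q
    · exact absurd rfl hpq
    · refine main _ (Sum.inr 1) (Sum.inr 0) (Sum.inl 1) (Sum.inr 2) (Sum.inr 3) (Sum.inl 0) (Sum.inl 2) (Sum.inl 3) (by decide) ?_ ?_ ?_ ?_ ?_ ?_ ?_ ?_ ?_ ?_ ?_ ?_ <;>
        first
        | exact he
        | exact he.symm
        | exact hA _ _ (by decide)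
        | exact hA' _ _ (by decide)
    · refine main _ (Sum.inr 2) (Sum.inr 0) (Sum.inl 1) (Sum.inr 1) (Sum.inr 3) (Sum.inl 0) (Sum.inl 2) (Sum.inl 3) (by decide) ?_ ?_ ?_ ?_ ?_ ?_ ?_ ?_ ?_ ?_ ?_ ?_ <;>
        first
        | exact he
        | exact he.symm
        | exact hA _ _ (by decide)
        | exact hA' _ _ (by decide)
    · refine main _ (Sum.inr 3) (Sum.inr 0) (Sum.inl 1) (Sum.inr 1) (Sum.inr 2) (Sum.inl 0) (Sum.inl 2) (Sum.inl 3) (by decide) ?_ ?_ ?_ ?_ ?_ ?_ ?_ ?_ ?_ ?_ ?_ ?_ <;>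
        first
        | exact he
        | exact he.symm
        | exact hA _ _ (by decide)
        | exact hA' _ _ (by decide)
    · refine main _ (Sum.inr 1) (Sum.inr 0) (Sum.inl 1) (Sum.inr 2) (Sum.inr 3) (Sum.inl 0) (Sum.inl 2) (Sum.inl 3) (by decide) ?_ ?_ ?_ ?_ ?_ ?_ ?_ ?_ ?_ ?_ ?_ ?_ <;>
        first
        | exact he
        | exact he.symm
        | exact hA _ _ (by decide)
        | exact hA' _ _ (by decide)
    · exact absurd rfl hpq
    · refine main _ (Sum.inr 1) (Sum.inr 2) (Sum.inl 0) (Sum.inr 0) (Sum.inr 3) (Sum.inl 1) (Sum.inl 2) (Sum.inl 3) (by decide) ?_ ?_ ?_ ?_ ?_ ?_ ?_ ?_ ?_ ?_ ?_ ?_ <;>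
        first
        | exact he
        | exact he.symm
        | exact hA _ _ (by decide)
        | exact hA' _ _ (by decide)
    · refine main _ (Sum.inr 1) (Sum.inr 3) (Sum.inl 0) (Sum.inr 0) (Sum.inr 2) (Sum.inl 1) (Sum.inl 2) (Sum.inl 3) (by decide) ?_ ?_ ?_ ?_ ?_ ?_ ?_ ?_ ?_ ?_ ?_ ?_ <;>
        first
        | exact he
        | exact he.symm
        | exact hA _ _ (by decide)
        | exact hA' _ _ (by decide)
    · refine main _ (Sum.inr 2) (Sum.inr 0) (Sum.inl 1) (Sum.inr 1) (Sum.inr 3) (Sum.inl 0) (Sum.inl 2) (Sum.inl 3) (by decide) ?_ ?_ ?_ ?_ ?_ ?_ ?_ ?_ ?_ ?_ ?_ ?_ <;>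
        first
        | exact he
        | exact he.symm
        | exact hA _ _ (by decide)
        | exact hA' _ _ (by decide)
    · refine main _ (Sum.inr 2) (Sum.inr 1) (Sum.inl 0) (Sum.inr 0) (Sum.inr 3) (Sum.inl 1) (Sum.inl 2) (Sum.inl 3) (by decide) ?_ ?_ ?_ ?_ ?_ ?_ ?_ ?_ ?_ ?_ ?_ ?_ <;>
        first
        | exact he
        | exact he.symm
        | exact hA _ _ (by decide)
        | exact hA' _ _ (by decide)
    · exact absurd rfl hpq
    · refine main _ (Sum.inr 2) (Sum.inr 3) (Sum.inl 0) (Sum.inr 0) (Sum.inr 1) (Sum.inl 1) (Sum.inl 2) (Sum.inl 3) (by decide) ?_ ?_ ?_ ?_ ?_ ?_ ?_ ?_ ?_ ?_ ?_ ?_ <;>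
        first
        | exact he
        | exact he.symm
        | exact hA _ _ (by decide)
        | exact hA' _ _ (by decide)
    · refine main _ (Sum.inr 3) (Sum.inr 0) (Sum.inl 1) (Sum.inr 1) (Sum.inr 2) (Sum.inl 0) (Sum.inl 2) (Sum.inl 3) (by decide) ?_ ?_ ?_ ?_ ?_ ?_ ?_ ?_ ?_ ?_ ?_ ?_ <;>
        first
        | exact he
        | exact he.symm
        | exact hA _ _ (by decide)
        | exact hA' _ _ (by decide)
    · refine main _ (Sum.inr 3) (Sum.inr 1) (Sum.inl 0) (Sum.inr 0) (Sum.inr 2) (Sum.inl 1) (Sum.inl 2) (Sum.inl 3) (by decide) ?_ ?_ ?_ ?_ ?_ ?_ ?_ ?_ ?_ ?_ ?_ ?_ <;>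
        first
        | exact he
        | exact he.symm
        | exact hA _ _ (by decide)
        | exact hA' _ _ (by decide)
    · refine main _ (Sum.inr 3) (Sum.inr 2) (Sum.inl 0) (Sum.inr 0) (Sum.inr 1) (Sum.inl 1) (Sum.inl 2) (Sum.inl 3) (by decide) ?_ ?_ ?_ ?_ ?_ ?_ ?_ ?_ ?_ ?_ ?_ ?_ <;>
        first
        | exact he
        | exact he.symm
        | exact hA _ _ (by decide)
        | exact hA' _ _ (by decide)
    · exact absurd rfl hpq
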